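/- Let S_λ be a formally normal weighted shift on a directed tree T with weights {λ_v}_{v∈V°}. Then for every u ∈ V° with ‖S_λ e_u‖ > 0, one has ‖S_λ e_u‖ = |λ_u|, λ_u ≠ 0, and λ_v = 0 for every sibling v of u (every v ∈ Chi(parent(u)) with v ≠ u); in particular ‖S_λ e_{parent(u)}‖ = ‖S_λ e_u‖ > 0. -/

import Mathlib

open scoped ENNReal ComplexConjugate Classical

/-- A directed tree: a connected directed graph with no (directed) circuits in which
every vertex has at most one parent and at most one vertex has no parent (the root). -/
structure DirectedTree (V : Type*) where
  E : V → V → Prop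
  parent_unique : ∀ ⦃u₁ u₂ v : V⦄, E u₁ v → E u₂ v → u₁ = u₂
  no_circuit : ∀ v : V, ¬ Relation.TransGen E v v
  connected : ∀ u v : V, Relation.ReflTransGen (fun a b => E a b ∨ E b a) u v
  root_unique : ∀ ⦃r₁ r₂ : V⦄, (∀ u, ¬ E u r₁) → (∀ u, ¬ E u r₂) → r₁ = r₂

namespace DirectedTree

variable {V : Type*} (T : DirectedTree V)

/-- `v ∈ V°`, i.e. `v` is not a root. -/
def HasParent (v : V) : Prop := ∃ u, T.E u v

/-- The parent partial map (junk value `v` itself at a root). -/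
noncomputable def par (v : V) : V := if h : T.HasParent v then h.choose else v

theorem par_spec {v : V} (h : T.HasParent v) : T.E (T.par v) v := by
  rw [par, dif_pos h]; exact h.choose_spec

/-- the child set of a vertex -/
def chi (u : V) : Set V := {v | T.E u v}

/-- the child set of a set of vertices -/
def chiSet (W : Set V) : Set V := {v | ∃ u ∈ W, T.E u v}

/-- the iterated child set `Chi^n(u)` -/
def chiN (n : ℕ) (u : V) : Set V := (T.chiSet)^[n] {u}

/-- the set of descendants of a vertex -/
def des (u : V) : Set V := ⋃ n : ℕ, T.chiN n u

/-- the iterated parent partial map, as an `Option`-valued map -/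
noncomputable def parN : ℕ → V → Option V
  | 0, v => some v
  | n + 1, v => if T.HasParent v then parN n (T.par v) else none

end DirectedTree

/-- the Hilbert space `ℓ²(V)` -/
abbrev l2 (V : Type*) : Type _ := lp (fun _ : V => ℂ) 2

/-- the canonical orthonormal basis vector `e_u` of `ℓ²(V)` -/
noncomputable def evec {V : Type*} (u : V) : l2 V := lp.single 2 u 1

variable {V : Type*}

/-- the formal action `Λ_T` of a weighted shift with weights `lam` -/
noncomputable def lamMap (T : DirectedTree V) (lam : V → ℂ) (f : V → ℂ) : V → ℂ :=
  fun v => if T.HasParent v then lam v * f (T.par v) else 0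

theorem lamMap_add (T : DirectedTree V) (lam : V → ℂ) (f g : V → ℂ) :
    lamMap T lam (f + g) = lamMap T lam f + lamMap T lam g := by
  funext v
  simp only [lamMap, Pi.add_apply]
  split_ifs <;> ring

theorem lamMap_smul (T : DirectedTree V) (lam : V → ℂ) (c : ℂ) (f : V → ℂ) :
    lamMap T lam (c • f) = c • lamMap T lam f := by
  funext v
  simp only [lamMap, Pi.smul_apply, smul_eq_mul]
  split_ifs <;> ring

/-- the (maximal) domain of the weighted shift `S_lam` -/
noncomputable def shiftDomain (T : DirectedTree V) (lam : V → ℂ) : Submodule ℂ (l2 V) where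
  carrier := {f : l2 V | Memℓp (lamMap T lam ⇑f) 2}
  zero_mem' := by
    have : lamMap T lam ⇑(0 : l2 V) = 0 := by
      funext v; simp [lamMap]
    simp only [Set.mem_setOf_eq, this]
    exact zero_memℓp
  add_mem' := by
    intro f g hf hg
    have h : lamMap T lam ⇑(f + g) = lamMap T lam ⇑f + lamMap T lam ⇑g := by
      rw [lp.coeFn_add]; exact lamMap_add T lam _ _
    simp only [Set.mem_setOf_eq, h]
    exact hf.add hg
  smul_mem' := by
    intro c f hf
    have h : lamMap T lam ⇑(c • f) = c • lamMap T lam ⇑f := by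
      rw [lp.coeFn_smul]; exact lamMap_smul T lam _ _
    simp only [Set.mem_setOf_eq, h]
    exact hf.const_smul c

/-- the weighted shift `S_lam` on the directed tree `T`, as an unbounded operator in `ℓ²(V)` -/
noncomputable def shift (T : DirectedTree V) (lam : V → ℂ) : l2 V →ₗ.[ℂ] l2 V where
  domain := shiftDomain T lam
  toFun :=
    { toFun := fun f => ⟨lamMap T lam ⇑(f : l2 V), f.2⟩
      map_add' := by
        intro f g
        apply Subtype.ext
        exact lamMap_add T lam _ _
      map_smul' := by
        intro c f
        apply Subtype.ext
        exact lamMap_smul T lam _ _ }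
/-- A densely defined operator `A` is formally normal if `dom A ⊆ dom A*` and
`‖A* h‖ = ‖A h‖` for all `h ∈ dom A`. -/
def FormallyNormal {H : Type*} [NormedAddCommGroup H] [InnerProductSpace ℂ H]
    [CompleteSpace H] (A : H →ₗ.[ℂ] H) : Prop :=
  Dense (A.domain : Set H) ∧ A.domain ≤ A.adjoint.domain ∧
    ∀ (f : H) (hf : f ∈ A.domain) (hf' : f ∈ A.adjoint.domain),
      ‖A.adjoint ⟨f, hf'⟩‖ = ‖A ⟨f, hf⟩‖

/-- A densely defined operator `A` is normal if `dom A = dom A*` and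
`‖A* h‖ = ‖A h‖` for all `h ∈ dom A` (such an operator is automatically closed). -/
def IsNormalOp {H : Type*} [NormedAddCommGroup H] [InnerProductSpace ℂ H]
    [CompleteSpace H] (A : H →ₗ.[ℂ] H) : Prop :=
  Dense (A.domain : Set H) ∧ A.domain = A.adjoint.domain ∧
    ∀ (f : H) (hf : f ∈ A.domain) (hf' : f ∈ A.adjoint.domain),
      ‖A.adjoint ⟨f, hf'⟩‖ = ‖A ⟨f, hf⟩‖


section Aux

variable {V : Type*}

local notation "⟪" x ", " y "⟫" => @inner ℂ _ _ x y

theorem evec_apply (u v : V) : (evec u : l2 V) v = if v = u then (1:ℂ) else 0 := by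
  rw [evec, lp.single_apply]
  split_ifs with h
  · subst h; simp
  · simp [h]

theorem par_eq_of_E (T : DirectedTree V) {u v : V} (h : T.E u v) : T.par v = u :=
  T.parent_unique (T.par_spec ⟨u, h⟩) h

theorem shift_coe (T : DirectedTree V) (lam : V → ℂ) (f : (shift T lam).domain) :
    ⇑(shift T lam f : l2 V) = lamMap T lam ⇑(f : l2 V) := rfl

theorem shift_evec_apply (T : DirectedTree V) (lam : V → ℂ) {u : V}
    (h : evec u ∈ (shift T lam).domain) (c : V) :
    (shift T lam ⟨evec u, h⟩ : l2 V) c = if T.E u c then lam c else 0 := by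
  have hc0 := congrFun (shift_coe T lam ⟨evec u, h⟩) c
  rw [hc0]
  show (if T.HasParent c then lam c * (evec u : l2 V) (T.par c) else 0) = _
  by_cases hc : T.HasParent c
  · rw [if_pos hc, evec_apply]
    by_cases he : T.E u c
    · rw [if_pos (par_eq_of_E T he), if_pos he, mul_one]
    · rw [if_neg, if_neg he, mul_zero]
      intro hpar; exact he (hpar ▸ T.par_spec hc)
  · rw [if_neg hc, if_neg fun he => hc ⟨u, he⟩]

theorem norm_evec (u : V) : ‖(evec u : l2 V)‖ = 1 := by
  have h2 : (0:ℝ) < (2 : ℝ≥0∞).toReal := by norm_num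
  have := lp.norm_single (E := fun _ : V => ℂ) (p := 2) (by norm_num) u (1:ℂ)
  simpa [evec] using this

theorem inner_evec_left (u : V) (f : l2 V) : ⟪evec u, f⟫ = f u := by
  rw [evec, lp.inner_single_left, RCLike.inner_apply, map_one, mul_one]

theorem adjoint_evec (T : DirectedTree V) (lam : V → ℂ)
    (hd : Dense ((shift T lam).domain : Set (l2 V))) {u : V}
    (hu : T.HasParent u) (h' : evec u ∈ (shift T lam).adjoint.domain) :
    (shift T lam).adjoint ⟨evec u, h'⟩ = conj (lam u) • evec (T.par u) := by
  apply LinearPMap.adjoint_apply_eq hd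
  intro x
  rw [inner_smul_left, inner_evec_left, inner_evec_left]
  have hc0 := congrFun (shift_coe T lam x) u
  rw [hc0]
  show _ = (if T.HasParent u then lam u * (x : l2 V) (T.par u) else 0)
  rw [if_pos hu, starRingEnd_self_apply]

theorem evec_mem_domain (T : DirectedTree V) (lam : V → ℂ)
    (hd : Dense ((shift T lam).domain : Set (l2 V))) (v : V) :
    evec v ∈ (shift T lam).domain := by
  obtain ⟨g, hg, hgv⟩ : ∃ g, g ∈ (shift T lam).domain ∧ (g : l2 V) v ≠ 0 := by
    by_contra hcon
    push_neg at hcon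
    have hclosed : IsClosed {f : l2 V | ⟪evec v, f⟫ = 0} :=
      isClosed_eq (Continuous.inner continuous_const continuous_id) continuous_const
    have hsub : ((shift T lam).domain : Set (l2 V)) ⊆ {f : l2 V | ⟪evec v, f⟫ = 0} := by
      intro f hf
      simp only [Set.mem_setOf_eq, inner_evec_left]
      exact hcon f hf
    have huniv : closure ((shift T lam).domain : Set (l2 V)) ⊆ {f : l2 V | ⟪evec v, f⟫ = 0} :=
      hclosed.closure_subset_iff.2 hsub
    have hmem : evec v ∈ {f : l2 V | ⟪evec v, f⟫ = 0} := huniv (hd.closure_eq ▸ Set.mem_univ _)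
    rw [Set.mem_setOf_eq, inner_evec_left, evec_apply, if_pos rfl] at hmem
    exact one_ne_zero hmem
  set h : l2 V := ((g : l2 V) v)⁻¹ • g with hdef
  have hh : h ∈ (shift T lam).domain := Submodule.smul_mem _ _ hg
  have hhv : (h : l2 V) v = 1 := by
    rw [hdef, lp.coeFn_smul, Pi.smul_apply, smul_eq_mul, inv_mul_cancel₀ hgv]
  have hh' : Memℓp (lamMap T lam ⇑(h : l2 V)) 2 := hh
  have h2 : (0:ℝ) < (2 : ℝ≥0∞).toReal := by norm_num
  have hsum := (memℓp_gen_iff h2).1 hh'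
  show Memℓp (lamMap T lam ⇑(evec v : l2 V)) 2
  apply memℓp_gen
  refine Summable.of_nonneg_of_le (fun c => Real.rpow_nonneg (norm_nonneg _) _) ?_ hsum
  intro c
  refine Real.rpow_le_rpow (norm_nonneg _) ?_ ENNReal.toReal_nonneg
  show ‖lamMap T lam ⇑(evec v : l2 V) c‖ ≤ ‖lamMap T lam ⇑(h : l2 V) c‖
  rw [lamMap, lamMap]
  by_cases hc : T.HasParent c
  · rw [if_pos hc, if_pos hc, evec_apply]
    by_cases he : T.par c = v
    · rw [if_pos he, he, hhv, mul_one]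
    · rw [if_neg he, mul_zero, norm_zero]
      exact norm_nonneg _
  · rw [if_neg hc, if_neg hc]

theorem inner_eq_of_norms {H : Type*} [NormedAddCommGroup H] [InnerProductSpace ℂ H]
    (x y a b : H)
    (h1 : ‖a + b‖ = ‖x + y‖) (h2 : ‖a - b‖ = ‖x - y‖)
    (h3 : ‖a - (RCLike.I : ℂ) • b‖ = ‖x - (RCLike.I : ℂ) • y‖)
    (h4 : ‖a + (RCLike.I : ℂ) • b‖ = ‖x + (RCLike.I : ℂ) • y‖) : ⟪a, b⟫ = ⟪x, y⟫ := by
  rw [inner_eq_sum_norm_sq_div_four, inner_eq_sum_norm_sq_div_four (𝕜 := ℂ) x y,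
    h1, h2, h3, h4]

theorem norm_adjoint_comb (T : DirectedTree V) (lam : V → ℂ)
    (hfn : FormallyNormal (shift T lam)) {f g : l2 V}
    (hf : f ∈ (shift T lam).domain) (hg : g ∈ (shift T lam).domain) (c : ℂ) :
    ‖(shift T lam).adjoint ⟨f, hfn.2.1 hf⟩ + c • (shift T lam).adjoint ⟨g, hfn.2.1 hg⟩‖ =
      ‖shift T lam ⟨f, hf⟩ + c • shift T lam ⟨g, hg⟩‖ := by
  have hmem : f + c • g ∈ (shift T lam).domain :=
    add_mem hf (Submodule.smul_mem _ _ hg)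
  have hmem' : f + c • g ∈ (shift T lam).adjoint.domain := hfn.2.1 hmem
  have h := hfn.2.2 (f + c • g) hmem hmem'
  have e1 : (⟨f + c • g, hmem'⟩ : (shift T lam).adjoint.domain)
      = ⟨f, hfn.2.1 hf⟩ + c • ⟨g, hfn.2.1 hg⟩ := rfl
  have e2 : (⟨f + c • g, hmem⟩ : (shift T lam).domain)
      = ⟨f, hf⟩ + c • ⟨g, hg⟩ := rfl
  rw [e1, e2, LinearPMap.map_add, LinearPMap.map_add, LinearPMap.map_smul,
    LinearPMap.map_smul] at h
  exact h

end Aux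

/-- for a formally normal weighted shift, if `u ∈ V°` and `‖S_λ e_u‖ > 0`,
then `‖S_λ e_u‖ = |λ_u|`, `λ_u ≠ 0`, all siblings of `u` carry zero weight, and
`‖S_λ e_{par(u)}‖ = ‖S_λ e_u‖ > 0`. -/
theorem formallyNormal_local_structure {V : Type*} (T : DirectedTree V) (lam : V → ℂ)
    (hfn : FormallyNormal (shift T lam)) (u : V) (hu : T.HasParent u)
    (hmem : evec u ∈ (shift T lam).domain)
    (hpos : 0 < ‖shift T lam ⟨evec u, hmem⟩‖) :
    ‖shift T lam ⟨evec u, hmem⟩‖ = ‖lam u‖ ∧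
    lam u ≠ 0 ∧
    (∀ v : V, v ∈ T.chi (T.par u) → v ≠ u → lam v = 0) ∧
    ∀ hp : evec (T.par u) ∈ (shift T lam).domain,
      ‖shift T lam ⟨evec (T.par u), hp⟩‖ = ‖shift T lam ⟨evec u, hmem⟩‖ ∧
      0 < ‖shift T lam ⟨evec (T.par u), hp⟩‖ := by
  set w := T.par u with hw
  have hu' : evec u ∈ (shift T lam).adjoint.domain := hfn.2.1 hmem
  have hadj_u : (shift T lam).adjoint ⟨evec u, hu'⟩ = conj (lam u) • evec w :=
    adjoint_evec T lam hfn.1 hu hu'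
  have hnorm1 : ‖shift T lam ⟨evec u, hmem⟩‖ = ‖lam u‖ := by
    rw [← hfn.2.2 (evec u) hmem hu', hadj_u, norm_smul, norm_evec, mul_one,
      Complex.norm_conj]
  have hlu : lam u ≠ 0 := by
    intro h0
    rw [hnorm1, h0, norm_zero] at hpos
    exact lt_irrefl 0 hpos
  have hsib : ∀ v : V, v ∈ T.chi w → v ≠ u → lam v = 0 := by
    intro v hv hne
    have hEwv : T.E w v := hv
    have hvp : T.HasParent v := ⟨w, hEwv⟩
    have hmv : evec v ∈ (shift T lam).domain := evec_mem_domain T lam hfn.1 v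
    have hv' : evec v ∈ (shift T lam).adjoint.domain := hfn.2.1 hmv
    have hadj_v : (shift T lam).adjoint ⟨evec v, hv'⟩ = conj (lam v) • evec w := by
      rw [adjoint_evec T lam hfn.1 hvp hv', par_eq_of_E T hEwv]
    have h1 := norm_adjoint_comb T lam hfn hmem hmv 1
    have h2 := norm_adjoint_comb T lam hfn hmem hmv (-1)
    have h3 := norm_adjoint_comb T lam hfn hmem hmv (-(RCLike.I : ℂ))
    have h4 := norm_adjoint_comb T lam hfn hmem hmv (RCLike.I : ℂ)
    rw [one_smul, one_smul] at h1
    rw [neg_one_smul, neg_one_smul, ← sub_eq_add_neg, ← sub_eq_add_neg] at h2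
    rw [neg_smul, neg_smul, ← sub_eq_add_neg, ← sub_eq_add_neg] at h3
    have hinner := inner_eq_of_norms _ _ _ _ h1 h2 h3 h4
    have hXY : (inner ℂ (shift T lam ⟨evec u, hmem⟩) (shift T lam ⟨evec v, hmv⟩) : ℂ) = 0 := by
      rw [lp.inner_eq_tsum]
      have hterm : ∀ c : V, (inner ℂ ((shift T lam ⟨evec u, hmem⟩ : l2 V) c)
          ((shift T lam ⟨evec v, hmv⟩ : l2 V) c) : ℂ) = 0 := by
        intro c
        rw [RCLike.inner_apply, shift_evec_apply, shift_evec_apply]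
        by_cases hc1 : T.E u c
        · rw [if_pos hc1, if_neg (fun hc2 => hne (T.parent_unique hc2 hc1)), zero_mul]
        · rw [if_neg hc1, map_zero, mul_zero]
      rw [tsum_congr hterm, tsum_zero]
    rw [hXY, hadj_u, hadj_v, inner_smul_left, inner_smul_right, inner_evec_left,
      evec_apply, if_pos rfl, mul_one, starRingEnd_self_apply] at hinner
    rcases mul_eq_zero.1 hinner with h0 | h0
    · exact absurd h0 hlu
    · exact (map_eq_zero (starRingEnd ℂ)).1 h0
  refine ⟨hnorm1, hlu, hsib, ?_⟩
  intro hp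
  have hEwu : T.E w u := T.par_spec hu
  have hkey : (shift T lam ⟨evec w, hp⟩ : l2 V) = lam u • evec u := by
    apply lp.ext
    funext c
    rw [lp.coeFn_smul, Pi.smul_apply, smul_eq_mul, shift_evec_apply, evec_apply]
    by_cases hc : c = u
    · subst hc; rw [if_pos hEwu, if_pos rfl, mul_one]
    · rw [if_neg hc, mul_zero]
      by_cases hEc : T.E w c
      · rw [if_pos hEc]; exact hsib c hEc hc
      · rw [if_neg hEc]
  have hnw : ‖shift T lam ⟨evec w, hp⟩‖ = ‖shift T lam ⟨evec u, hmem⟩‖ := by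
    rw [hkey, norm_smul, norm_evec, mul_one, hnorm1]
  exact ⟨hnw, hnw ▸ hpos⟩
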